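/- Let y₁ ∈ ℝ and define θ̄ = sgn(y₁)·arctan(|y₁|^{1/2}) and d = (1/2)·|y₁|^{1/2}·(1+|y₁|)^{1/2} if |y₁| ≤ 1, and θ̄ = sgn(y₁)·π/4, d = |y₁|/√2 if |y₁| > 1. Further set x̄ := d·cos(−θ̄) and ȳ := y₁ + d·sin(−θ̄). Then ȳ = y₁/2 and x̄² + ȳ² = d². -/

import Mathlib

open Real

lemma midpoint_key (y₁ θb d : ℝ)
    (hθb : θb = if |y₁| ≤ 1 then Real.sign y₁ * Real.arctan (Real.sqrt |y₁|)
      else Real.sign y₁ * (π / 4))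
    (hd : d = if |y₁| ≤ 1 then (1/2) * Real.sqrt |y₁| * Real.sqrt (1 + |y₁|)
      else |y₁| / Real.sqrt 2) :
    d * Real.sin θb = y₁ / 2 := by
  have habs : Real.sqrt |y₁| ^ 2 = |y₁| := Real.sq_sqrt (abs_nonneg _)
  have h1pos : (0:ℝ) < 1 + |y₁| := by positivity
  have hsign : Real.sign y₁ * |y₁| = y₁ := by
    rcases lt_trichotomy y₁ 0 with hy | hy | hy
    · rw [Real.sign_of_neg hy, abs_of_neg hy]; ring
    · simp [hy]
    · rw [Real.sign_of_pos hy, abs_of_pos hy]; ring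
  by_cases h : |y₁| ≤ 1
  · simp only [h, if_true] at hθb hd
    subst hθb hd
    have hsin : Real.sin (Real.sign y₁ * Real.arctan (Real.sqrt |y₁|)) =
        Real.sign y₁ * (Real.sqrt |y₁| / Real.sqrt (1 + Real.sqrt |y₁| ^ 2)) := by
      rcases lt_trichotomy y₁ 0 with hy | hy | hy
      · rw [Real.sign_of_neg hy]; simp [Real.sin_arctan]
      · simp [hy]
      · rw [Real.sign_of_pos hy]; simp [Real.sin_arctan]
    rw [hsin, habs]
    have hne : Real.sqrt (1 + |y₁|) ≠ 0 := by positivity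
    field_simp
    ring_nf
    rw [habs]
    linear_combination hsign
  · simp only [h, if_false] at hθb hd
    subst hθb hd
    have hy : y₁ ≠ 0 := by intro h0; simp [h0] at h
    have hsin : Real.sin (Real.sign y₁ * (π/4)) = Real.sign y₁ * (Real.sqrt 2 / 2) := by
      rcases lt_trichotomy y₁ 0 with hy' | hy' | hy'
      · rw [Real.sign_of_neg hy']; simp [Real.sin_pi_div_four]
      · exact absurd hy' hy
      · rw [Real.sign_of_pos hy']; simp [Real.sin_pi_div_four]
    rw [hsin]
    have h2 : Real.sqrt 2 ≠ 0 := by positivity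
    have h22 : Real.sqrt 2 * Real.sqrt 2 = 2 := Real.mul_self_sqrt (by norm_num)
    field_simp
    linear_combination hsign

/-- the midpoint construction halves the lateral offset and
places the point at distance `d` from the origin. -/
theorem midpoint_construction
    (y₁ θb d xb yb : ℝ)
    (hθb : θb = if |y₁| ≤ 1 then Real.sign y₁ * Real.arctan (Real.sqrt |y₁|)
      else Real.sign y₁ * (π / 4))
    (hd : d = if |y₁| ≤ 1 then (1/2) * Real.sqrt |y₁| * Real.sqrt (1 + |y₁|)
      else |y₁| / Real.sqrt 2)
    (hxb : xb = d * Real.cos (-θb))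
    (hyb : yb = y₁ + d * Real.sin (-θb)) :
    yb = y₁ / 2 ∧ xb ^ 2 + yb ^ 2 = d ^ 2 := by
  have key := midpoint_key y₁ θb d hθb hd
  have hy : yb = y₁ / 2 := by
    rw [hyb, Real.sin_neg, mul_neg, key]; ring
  refine ⟨hy, ?_⟩
  have hpyth : Real.cos θb ^ 2 = 1 - Real.sin θb ^ 2 := by
    have := Real.sin_sq_add_cos_sq θb; linarith
  rw [hxb, hy, Real.cos_neg, mul_pow, hpyth]
  have : (d * Real.sin θb) ^ 2 = (y₁/2) ^ 2 := by rw [key]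
  nlinarith [this]
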